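/- Let d ≥ 1, σ > 0, c > 0, κ ≥ 0 and T > 0, and let ψ : ℝ^d → ℂ be a measurable function with Re ψ(ξ) ≥ c‖ξ‖^σ for all ξ. Then there exists a constant C > 0 such that for every t ∈ (0, T] and every g ∈ L²(ℝ^d; ℂ), the function ξ ↦ (1 + ‖ξ‖²)^κ e^{−tψ(ξ)} g(ξ) belongs to L²(ℝ^d; ℂ) and its L² norm is at most C t^{−2κ/σ} ‖g‖_{L²}. -/

import Mathlib

open Set MeasureTheory

/-- `x ^ a * exp (-x)` is bounded by `1 + ⌈a⌉!` for `x ≥ 0`. -/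
lemma rpow_mul_exp_neg_le {a : ℝ} (ha : 0 ≤ a) {x : ℝ} (hx : 0 ≤ x) :
    x ^ a * Real.exp (-x) ≤ 1 + ((Nat.ceil a).factorial) := by
  rcases le_total x 1 with hx1 | hx1
  · have h1 : x ^ a ≤ 1 := Real.rpow_le_one hx hx1 ha
    have h2 : Real.exp (-x) ≤ 1 := Real.exp_le_one_iff.mpr (by linarith)
    have : x ^ a * Real.exp (-x) ≤ 1 * 1 :=
      mul_le_mul h1 h2 (Real.exp_pos _).le zero_le_one
    have hfac : (0 : ℝ) ≤ ((Nat.ceil a).factorial) := by positivity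
    linarith
  · have h1 : x ^ a ≤ x ^ ((Nat.ceil a : ℕ) : ℝ) :=
      Real.rpow_le_rpow_of_exponent_le hx1 (Nat.le_ceil a)
    rw [Real.rpow_natCast] at h1
    have h2 : x ^ (Nat.ceil a) ≤ ((Nat.ceil a).factorial) * Real.exp x := by
      have := Real.pow_div_factorial_le_exp x hx (Nat.ceil a)
      have hfac : (0 : ℝ) < ((Nat.ceil a).factorial) := by positivity
      rw [div_le_iff₀ hfac] at this
      linarith [this, mul_comm (((Nat.ceil a).factorial) : ℝ) (Real.exp x)]
    have h3 : x ^ a * Real.exp (-x) ≤ (((Nat.ceil a).factorial) * Real.exp x) * Real.exp (-x) :=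
      mul_le_mul (h1.trans h2) le_rfl (Real.exp_pos _).le (by positivity)
    rw [mul_assoc, ← Real.exp_add, add_neg_cancel, Real.exp_zero, mul_one] at h3
    linarith

/-- Fourier-side form of the semigroup smoothing estimate in `L²`: if
`Re ψ(ξ) ≥ c ‖ξ‖^σ`, then the multiplier `(1 + ‖ξ‖²)^κ e^{-tψ(ξ)}` maps `L²` to `L²`
with norm at most `C t^(-2κ/σ)` for `t ∈ (0, T]`. -/
theorem multiplier_L2_estimate (d : ℕ) (hd : 1 ≤ d) (σ c κ T : ℝ)
    (hσ : 0 < σ) (hc : 0 < c) (hκ : 0 ≤ κ) (hT : 0 < T)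
    (ψ : EuclideanSpace ℝ (Fin d) → ℂ) (hψmeas : Measurable ψ)
    (hψ : ∀ ξ, c * ‖ξ‖ ^ σ ≤ (ψ ξ).re) :
    ∃ C : ℝ, 0 < C ∧
      ∀ t ∈ Ioc (0 : ℝ) T, ∀ g : EuclideanSpace ℝ (Fin d) → ℂ,
        MemLp g 2 volume →
          MemLp (fun ξ => (((1 + ‖ξ‖ ^ 2) ^ κ : ℝ) : ℂ) *
              Complex.exp (-(t : ℂ) * ψ ξ) * g ξ) 2 volume ∧
          eLpNorm (fun ξ => (((1 + ‖ξ‖ ^ 2) ^ κ : ℝ) : ℂ) *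
              Complex.exp (-(t : ℂ) * ψ ξ) * g ξ) 2 volume ≤
            ENNReal.ofReal (C * t ^ (-(2 * κ / σ))) * eLpNorm g 2 volume := by
  set a : ℝ := 2 * κ / σ with ha_def
  have ha : 0 ≤ a := by positivity
  set M : ℝ := 1 + ((Nat.ceil a).factorial) with hM_def
  have hM : 0 < M := by positivity
  refine ⟨2 ^ κ * (T ^ a + M * c ^ (-a)), by positivity, ?_⟩
  intro t ht g hg
  obtain ⟨ht0, htT⟩ := ht
  -- pointwise bound on the multiplier
  have key : ∀ ξ : EuclideanSpace ℝ (Fin d),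
      (1 + ‖ξ‖ ^ 2) ^ κ * Real.exp (-(t * (ψ ξ).re)) ≤
        (2 ^ κ * (T ^ a + M * c ^ (-a))) * t ^ (-a) := by
    intro ξ
    set r : ℝ := ‖ξ‖ with hr_def
    have hr : 0 ≤ r := norm_nonneg _
    have hexp1 : Real.exp (-(t * (ψ ξ).re)) ≤ Real.exp (-(t * (c * r ^ σ))) := by
      apply Real.exp_le_exp.mpr
      have := hψ ξ
      nlinarith
    have hbase : (1 + r ^ 2 : ℝ) ^ κ ≤ 2 ^ κ * (1 + r ^ (2 * κ)) := by
      rcases le_total r 1 with hr1 | hr1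
      · have h1 : (1 + r ^ 2 : ℝ) ^ κ ≤ (2 : ℝ) ^ κ :=
          Real.rpow_le_rpow (by positivity) (by nlinarith) hκ
        have h2 : (0:ℝ) ≤ r ^ (2 * κ) := Real.rpow_nonneg hr _
        have h3 : (0:ℝ) < (2:ℝ) ^ κ := Real.rpow_pos_of_pos two_pos _
        nlinarith
      · have h1 : (1 + r ^ 2 : ℝ) ^ κ ≤ (2 * r ^ 2 : ℝ) ^ κ :=
          Real.rpow_le_rpow (by positivity) (by nlinarith) hκ
        have h2 : (2 * r ^ 2 : ℝ) ^ κ = 2 ^ κ * r ^ (2 * κ) := by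
          rw [Real.mul_rpow (by norm_num) (by positivity), ← Real.rpow_natCast r 2,
            ← Real.rpow_mul hr]
          norm_num [mul_comm]
        have h3 : (0:ℝ) < (2:ℝ) ^ κ := Real.rpow_pos_of_pos two_pos _
        have h4 : (0:ℝ) ≤ r ^ (2 * κ) := Real.rpow_nonneg hr _
        nlinarith [h1, h2.le, h2.ge]
    have hE : (0:ℝ) < Real.exp (-(t * (c * r ^ σ))) := Real.exp_pos _
    -- term 1 : 2^κ * exp ≤ 2^κ * T^a * t^(-a)
    have hterm1 : Real.exp (-(t * (c * r ^ σ))) ≤ T ^ a * t ^ (-a) := by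
      have h1 : Real.exp (-(t * (c * r ^ σ))) ≤ 1 := Real.exp_le_one_iff.mpr (by
        have : (0:ℝ) ≤ t * (c * r ^ σ) := by positivity
        linarith)
      have h2 : (1:ℝ) ≤ (T / t) ^ a :=
        Real.one_le_rpow ((one_le_div ht0).mpr htT) ha
      have h3 : (T / t) ^ a = T ^ a * t ^ (-a) := by
        rw [Real.div_rpow hT.le ht0.le, Real.rpow_neg ht0.le, div_eq_mul_inv]
      linarith [h3 ▸ h2, h1]
    -- term 2 : r^(2κ) * exp ≤ M * c^(-a) * t^(-a)
    have hterm2 : r ^ (2 * κ) * Real.exp (-(t * (c * r ^ σ))) ≤ M * c ^ (-a) * t ^ (-a) := by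
      set x : ℝ := t * (c * r ^ σ) with hx_def
      have hx : 0 ≤ x := by positivity
      have hid : r ^ (2 * κ) = x ^ a * (t * c) ^ (-a) := by
        have hσa : σ * a = 2 * κ := by rw [ha_def]; field_simp [hσ.ne']
        have h1 : x = (t * c) * r ^ σ := by rw [hx_def]; ring
        have h2 : x ^ a = (t * c) ^ a * (r ^ σ) ^ a := by
          rw [h1, Real.mul_rpow (by positivity) (Real.rpow_nonneg hr _)]
        have h3 : (r ^ σ) ^ a = r ^ (2 * κ) := by
          rw [← Real.rpow_mul hr, hσa]
        have h4 : (t * c) ^ a * (t * c) ^ (-a) = 1 := by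
          rw [← Real.rpow_add (by positivity), add_neg_cancel, Real.rpow_zero]
        calc r ^ (2 * κ) = (t * c) ^ (-a) * ((t * c) ^ a * r ^ (2 * κ)) := by
              rw [← mul_assoc, mul_comm ((t*c) ^ (-a)) ((t*c) ^ a), h4, one_mul]
          _ = x ^ a * (t * c) ^ (-a) := by rw [h2, h3]; ring
      have hb := rpow_mul_exp_neg_le ha hx
      have htc : (0:ℝ) < (t * c) ^ (-a) := Real.rpow_pos_of_pos (by positivity) _
      have h5 : (t * c) ^ (-a) = t ^ (-a) * c ^ (-a) := by
        rw [Real.mul_rpow ht0.le hc.le]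
      calc r ^ (2 * κ) * Real.exp (-x)
          = (x ^ a * Real.exp (-x)) * (t * c) ^ (-a) := by rw [hid]; ring
        _ ≤ M * (t * c) ^ (-a) := by
            apply mul_le_mul_of_nonneg_right _ htc.le
            exact hb
        _ = M * c ^ (-a) * t ^ (-a) := by rw [h5]; ring
    have hmono : (1 + r ^ 2) ^ κ * Real.exp (-(t * (ψ ξ).re)) ≤
        (2 ^ κ * (1 + r ^ (2 * κ))) * Real.exp (-(t * (c * r ^ σ))) := by
      have h0 : (0:ℝ) ≤ (1 + r ^ 2) ^ κ := Real.rpow_nonneg (by positivity) _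
      exact mul_le_mul hbase hexp1 (Real.exp_pos _).le
        (le_trans h0 hbase)
    calc (1 + r ^ 2) ^ κ * Real.exp (-(t * (ψ ξ).re))
        ≤ (2 ^ κ * (1 + r ^ (2 * κ))) * Real.exp (-(t * (c * r ^ σ))) := hmono
      _ = 2 ^ κ * (Real.exp (-(t * (c * r ^ σ))) +
            r ^ (2 * κ) * Real.exp (-(t * (c * r ^ σ)))) := by ring
      _ ≤ 2 ^ κ * (T ^ a * t ^ (-a) + M * c ^ (-a) * t ^ (-a)) := by
          have h3 : (0:ℝ) < (2:ℝ) ^ κ := Real.rpow_pos_of_pos two_pos _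
          apply mul_le_mul_of_nonneg_left _ h3.le
          linarith [hterm1, hterm2]
      _ = (2 ^ κ * (T ^ a + M * c ^ (-a))) * t ^ (-a) := by ring
  -- the norm bound for the function values
  have hnorm : ∀ ξ : EuclideanSpace ℝ (Fin d),
      ‖(((1 + ‖ξ‖ ^ 2) ^ κ : ℝ) : ℂ) * Complex.exp (-(t : ℂ) * ψ ξ) * g ξ‖ ≤
        (2 ^ κ * (T ^ a + M * c ^ (-a))) * t ^ (-a) * ‖g ξ‖ := by
    intro ξ
    have h1 : ‖(((1 + ‖ξ‖ ^ 2) ^ κ : ℝ) : ℂ) * Complex.exp (-(t : ℂ) * ψ ξ) * g ξ‖ =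
        (1 + ‖ξ‖ ^ 2) ^ κ * Real.exp (-(t * (ψ ξ).re)) * ‖g ξ‖ := by
      rw [norm_mul, norm_mul, Complex.norm_real, Real.norm_eq_abs,
        Complex.norm_exp]
      congr 2
      · exact abs_of_nonneg (Real.rpow_nonneg (by positivity) _)
      · congr 1
        simp [Complex.mul_re]
    rw [h1]
    exact mul_le_mul_of_nonneg_right (key ξ) (norm_nonneg _)
  -- measurability
  have hmeas : AEStronglyMeasurable
      (fun ξ : EuclideanSpace ℝ (Fin d) => (((1 + ‖ξ‖ ^ 2) ^ κ : ℝ) : ℂ) *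
        Complex.exp (-(t : ℂ) * ψ ξ) * g ξ) volume := by
    have h1 : Measurable fun ξ : EuclideanSpace ℝ (Fin d) =>
        (((1 + ‖ξ‖ ^ 2) ^ κ : ℝ) : ℂ) := by
      apply Complex.measurable_ofReal.comp
      exact ((continuous_const.add ((continuous_norm).pow 2)).rpow_const
        (fun x => Or.inr hκ)).measurable
    have h2 : Measurable fun ξ : EuclideanSpace ℝ (Fin d) =>
        Complex.exp (-(t : ℂ) * ψ ξ) :=
      Complex.measurable_exp.comp (measurable_const.mul hψmeas)
    exact ((h1.mul h2).aestronglyMeasurable.mul hg.1)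
  constructor
  · exact hg.of_le_mul hmeas (Filter.Eventually.of_forall hnorm)
  · calc eLpNorm _ 2 volume ≤
        ENNReal.ofReal ((2 ^ κ * (T ^ a + M * c ^ (-a))) * t ^ (-a)) * eLpNorm g 2 volume :=
          eLpNorm_le_mul_eLpNorm_of_ae_le_mul (Filter.Eventually.of_forall hnorm) 2
      _ = ENNReal.ofReal (2 ^ κ * (T ^ a + M * c ^ (-a)) * t ^ (-(2 * κ / σ))) *
            eLpNorm g 2 volume := by rw [ha_def]
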